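/- Suppose ψ : ℝ → ℝ is smooth with ψ'(y) ≥ y and ψ''(y) ≥ 1 for all y ≥ 1 (e.g., ψ(y) = y²). Let x₁ : [0,T) → ℝ be the maximal solution of ẍ₁ = ẋ₁·ψ'(x₁) with x₁(0) = ẋ₁(0) = 1. Then T < ∞ and the quantity -ẋ₁(t)·ψ''(x₁(t)) - ½ψ'(x₁(t))² tends to -∞ as t → T. -/

import Mathlib

open Set Metric


theorem aux_exists_solution_mem {E : Type*} [NormedAddCommGroup E] [NormedSpace ℝ E]
    [CompleteSpace E] {v : ℝ → E → E} {tMin tMax : ℝ} {t₀ : Icc tMin tMax} (x₀ : E)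
    {a L K : NNReal}
    (hpl : IsPicardLindelof v t₀ x₀ a 0 L K) :
    ∃ f : ℝ → E, f t₀ = x₀ ∧ ∀ t ∈ Icc tMin tMax,
      f t ∈ closedBall x₀ a ∧ HasDerivWithinAt f (v t (f t)) (Icc tMin tMax) t := by
  obtain ⟨α, hα⟩ := ODE.FunSpace.exists_isFixedPt_next hpl (mem_closedBall_self le_rfl)
  refine ⟨α.compProj, by rw [ODE.FunSpace.compProj_val, ← hα, ODE.FunSpace.next_apply₀],
    fun t ht => ⟨α.compProj_mem_closedBall hpl.mul_max_le, ?_⟩⟩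
  apply ODE.hasDerivWithinAt_picard_Icc t₀.2 hpl.continuousOn_uncurry
    α.continuous_compProj.continuousOn (fun _ ht' ↦ α.compProj_mem_closedBall hpl.mul_max_le)
    x₀ ht |>.congr_of_mem _ ht
  intro t' ht'
  nth_rw 1 [← hα]
  rw [ODE.FunSpace.compProj_of_mem ht', ODE.FunSpace.next_apply]


theorem geo_core (ψ x : ℝ → ℝ) (b : ℝ) (hb : 0 ≤ b)
    (hd1 : ∀ t ∈ Icc 0 b, DifferentiableAt ℝ x t)
    (hd2 : ∀ t ∈ Icc 0 b, DifferentiableAt ℝ (deriv x) t)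
    (hode : ∀ t ∈ Icc 0 b, deriv (deriv x) t = deriv x t * deriv ψ (x t))
    (hψ' : ∀ y : ℝ, 1 ≤ y → y ≤ deriv ψ y)
    (hx0 : x 0 = 1) (hv0 : deriv x 0 = 1) :
    (∀ t ∈ Icc 0 b, 0 < deriv x t) ∧ (∀ t ∈ Icc 0 b, 1 ≤ x t) ∧
      MonotoneOn (deriv x) (Icc 0 b) ∧
      (∀ t ∈ Icc 0 b, x t ^ 2 / 2 + 1 / 2 ≤ deriv x t) ∧ b < 2 := by
  have hcx : ContinuousOn x (Icc 0 b) := fun t ht => (hd1 t ht).continuousAt.continuousWithinAt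
  have hcv : ContinuousOn (deriv x) (Icc 0 b) :=
    fun t ht => (hd2 t ht).continuousAt.continuousWithinAt
  -- key sub-step, for any s ∈ [0,b] with deriv x > 0 on [0,s): x ≥ 1 on [0,s] and
  -- `deriv x` is monotone there with `deriv x s ≥ 1`.
  have key : ∀ s ∈ Icc 0 b, (∀ t, 0 ≤ t → t < s → 0 < deriv x t) →
      StrictMonoOn (deriv x) (Icc 0 s) ∧ (∀ t ∈ Icc 0 s, 1 ≤ x t) := by
    intro s hs hpos
    have hsub : Icc 0 s ⊆ Icc 0 b := Icc_subset_Icc le_rfl hs.2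
    have hxmono : MonotoneOn x (Icc 0 s) := by
      apply monotoneOn_of_deriv_nonneg (convex_Icc 0 s) (hcx.mono hsub)
      · intro t ht
        rw [interior_Icc] at ht
        exact (hd1 t (hsub (Ioo_subset_Icc_self ht))).differentiableWithinAt
      · intro t ht
        rw [interior_Icc] at ht
        exact (hpos t ht.1.le ht.2).le
    have hx1 : ∀ t ∈ Icc 0 s, 1 ≤ x t := by
      intro t ht
      have := hxmono (left_mem_Icc.2 hs.1) ht ht.1
      rwa [hx0] at this
    refine ⟨?_, hx1⟩
    apply strictMonoOn_of_deriv_pos (convex_Icc 0 s) (hcv.mono hsub)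
    intro t ht
    rw [interior_Icc] at ht
    have htm : t ∈ Icc 0 b := hsub (Ioo_subset_Icc_self ht)
    rw [hode t htm]
    have h1x : (1:ℝ) ≤ x t := hx1 t (Ioo_subset_Icc_self ht)
    have := hψ' (x t) h1x
    have hv := hpos t ht.1.le ht.2
    nlinarith
  -- Step 1: positivity of deriv x on [0,b]
  have hvpos : ∀ t ∈ Icc 0 b, 0 < deriv x t := by
    by_contra hcon
    push_neg at hcon
    obtain ⟨t₁, ht₁, ht₁le⟩ := hcon
    set S : Set ℝ := {t ∈ Icc 0 b | deriv x t ≤ 0} with hSdef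
    have hSne : S.Nonempty := ⟨t₁, ht₁, ht₁le⟩
    have hScl : IsClosed S := hcv.preimage_isClosed_of_isClosed isClosed_Icc isClosed_Iic
    have hbdd : BddBelow S := ⟨0, fun u hu => hu.1.1⟩
    set s := sInf S with hs
    have hsS : s ∈ S := hScl.csInf_mem hSne hbdd
    have hs0 : 0 < s := by
      rcases (hsS.1.1.lt_or_eq) with h | h
      · exact h
      · exfalso; rw [← h] at hsS; have := hsS.2; rw [hv0] at this; linarith
    have hpos : ∀ t, 0 ≤ t → t < s → 0 < deriv x t := by
      intro t ht hts
      by_contra hle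
      push_neg at hle
      have : t ∈ S := ⟨⟨ht, hts.le.trans hsS.1.2⟩, hle⟩
      exact absurd (csInf_le hbdd this) (not_le.2 hts)
    obtain ⟨hmono, _⟩ := key s hsS.1 hpos
    have := hmono (left_mem_Icc.2 hs0.le) (right_mem_Icc.2 hs0.le) hs0
    rw [hv0] at this
    have := hsS.2
    linarith
  have hposall : ∀ t, 0 ≤ t → t < b → 0 < deriv x t := fun t ht htb =>
    hvpos t ⟨ht, htb.le⟩
  obtain ⟨hvsm, hx1⟩ := key b (right_mem_Icc.2 hb) hposall
  have hx1' : ∀ t ∈ Icc 0 b, 1 ≤ x t := hx1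
  have hvmono : MonotoneOn (deriv x) (Icc 0 b) := hvsm.monotoneOn
  -- Step D : x t ^2/2 + 1/2 ≤ deriv x t
  have hxder : ∀ t ∈ Icc 0 b, HasDerivAt x (deriv x t) t := fun t ht =>
    (hd1 t ht).hasDerivAt
  have hD : ∀ t ∈ Icc 0 b, x t ^ 2 / 2 + 1 / 2 ≤ deriv x t := by
    set w : ℝ → ℝ := fun t => deriv x t - x t ^ 2 / 2 with hw
    have hwder : ∀ t ∈ Icc 0 b,
        HasDerivAt w (deriv (deriv x) t - x t * deriv x t) t := by
      intro t ht
      have h1 : HasDerivAt (fun u => x u ^ 2 / 2) (x t * deriv x t) t := by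
        have := ((hxder t ht).fun_pow 2).div_const 2
        exact this.congr_deriv (by norm_num; ring)
      exact ((hd2 t ht).hasDerivAt.sub h1)
    have hwmono : MonotoneOn w (Icc 0 b) := by
      apply monotoneOn_of_deriv_nonneg (convex_Icc 0 b)
      · intro t ht
        exact ((hwder t ht).continuousAt).continuousWithinAt
      · intro t ht
        rw [interior_Icc] at ht
        exact ((hwder t (Ioo_subset_Icc_self ht)).differentiableAt).differentiableWithinAt
      · intro t ht
        rw [interior_Icc] at ht
        have htm := Ioo_subset_Icc_self ht
        rw [(hwder t htm).deriv, hode t htm]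
        have h1x := hx1' t htm
        have := hψ' (x t) h1x
        have hv := hvpos t htm
        nlinarith
    intro t ht
    have := hwmono (left_mem_Icc.2 hb) ht ht.1
    have hw0 : w 0 = 1 / 2 := by simp [hw, hv0, hx0]; norm_num
    rw [hw0] at this
    simp only [hw] at this
    linarith
  refine ⟨hvpos, hx1', hvmono, hD, ?_⟩
  -- Step E : b < 2
  rcases eq_or_lt_of_le hb with h | hbpos
  · linarith
  set u : ℝ → ℝ := fun t => 2 - t - 2 * (x t)⁻¹ with hu
  have hxne : ∀ t ∈ Icc 0 b, x t ≠ 0 := fun t ht => by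
    have := hx1' t ht; linarith
  have huder : ∀ t ∈ Icc 0 b,
      HasDerivAt u (-1 + 2 * deriv x t / x t ^ 2) t := by
    intro t ht
    have h1 : HasDerivAt (fun s => (x s)⁻¹) (-(deriv x t) / x t ^ 2) t :=
      (hxder t ht).inv (hxne t ht)
    have h2 : HasDerivAt (fun s => 2 - s - 2 * (x s)⁻¹)
        (0 - 1 - 2 * (-(deriv x t) / x t ^ 2)) t :=
      ((hasDerivAt_const t 2).sub (hasDerivAt_id t)).sub (h1.const_mul 2)
    convert h2 using 1
    ring
  have humono : StrictMonoOn u (Icc 0 b) := by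
    apply strictMonoOn_of_deriv_pos (convex_Icc 0 b)
    · intro t ht
      exact ((huder t ht).continuousAt).continuousWithinAt
    · intro t ht
      rw [interior_Icc] at ht
      have htm := Ioo_subset_Icc_self ht
      rw [(huder t htm).deriv]
      have h1x := hx1' t htm
      have hvd := hD t htm
      have hx2 : (0:ℝ) < x t ^ 2 := by positivity
      rw [div_eq_mul_inv]
      nlinarith [mul_pos (show (0:ℝ) < 1 + x t ^ 2 - x t ^2 by norm_num) (inv_pos.2 hx2),
        mul_inv_cancel₀ (by positivity : (x t ^ 2) ≠ 0)]
  have hub := humono (left_mem_Icc.2 hb) (right_mem_Icc.2 hb) hbpos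
  have hu0 : u 0 = 0 := by simp [hu, hx0]
  rw [hu0] at hub
  have hxb := hx1' b (right_mem_Icc.2 hb)
  have hxbinv : 0 < (x b)⁻¹ := inv_pos.2 (by linarith)
  simp only [hu] at hub
  linarith

theorem geo_extend (ψ x₁ : ℝ → ℝ) (hψ : ContDiff ℝ (⊤ : ℕ∞) ψ) (τ : ℝ) (hτpos : 0 < τ)
    (hx0 : x₁ 0 = 1)
    (hsol' : ∀ t : ℝ, 0 ≤ t → t < τ →
      DifferentiableAt ℝ x₁ t ∧ DifferentiableAt ℝ (deriv x₁) t ∧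
        deriv (deriv x₁) t = deriv x₁ t * deriv ψ (x₁ t))
    (hfacts : ∀ t : ℝ, 0 ≤ t → t < τ → 0 < deriv x₁ t ∧ 1 ≤ x₁ t ∧ t < 2)
    (M : ℝ) (hM1 : 1 ≤ M) (hbdd : ∀ t : ℝ, 0 ≤ t → t < τ → deriv x₁ t ≤ M) :
    ∃ (T' : ℝ) (y₁ : ℝ → ℝ), τ < T' ∧ (∀ t : ℝ, 0 ≤ t → t < τ → y₁ t = x₁ t) ∧
      ∀ t : ℝ, 0 ≤ t → t < T' →
        DifferentiableAt ℝ y₁ t ∧ DifferentiableAt ℝ (deriv y₁) t ∧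
          deriv (deriv y₁) t = deriv y₁ t * deriv ψ (y₁ t) := by
  -- the trajectory
  set g : ℝ → ℝ × ℝ := fun t => (x₁ t, deriv x₁ t) with hgdef
  set F : ℝ × ℝ → ℝ × ℝ := fun p => (p.2, p.2 * deriv ψ p.1) with hFdef
  have hg : ∀ t : ℝ, 0 ≤ t → t < τ → HasDerivAt g (F (g t)) t := by
    intro t h0 hτ
    obtain ⟨hD1, hD2, hode⟩ := hsol' t h0 hτ
    have h2 : HasDerivAt (deriv x₁) (deriv x₁ t * deriv ψ (x₁ t)) t := by
      rw [← hode]; exact hD2.hasDerivAt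
    exact hD1.hasDerivAt.prodMk h2
  -- bound on x₁
  set L : ℝ := 1 + 2 * M with hLdef
  have hxle : ∀ t : ℝ, 0 ≤ t → t < τ → x₁ t ≤ L := by
    intro t h0 hτ'
    have hseg := norm_image_sub_le_of_norm_deriv_le_segment'
      (f := x₁) (f' := deriv x₁) (C := M) (a := 0) (b := t)
      (fun u hu => ((hsol' u hu.1 (lt_of_le_of_lt hu.2 hτ')).1.hasDerivAt).hasDerivWithinAt)
      (fun u hu => by
        have h1 := (hfacts u hu.1 (lt_trans hu.2 hτ')).1
        have h2 := hbdd u hu.1 (lt_trans hu.2 hτ')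
        rw [Real.norm_eq_abs, abs_of_pos h1]; exact h2)
      t ⟨h0, le_rfl⟩
    rw [Real.norm_eq_abs, hx0] at hseg
    have ht2 := (hfacts t h0 hτ').2.2
    have habs := abs_le.1 hseg
    have : x₁ t - 1 ≤ M * (t - 0) := habs.2
    nlinarith
  -- smoothness of F
  have hpsiT : ContDiff ℝ (⊤ : ℕ∞) ψ := hψ.of_le (by simp)
  have hψd : ContDiff ℝ (⊤ : ℕ∞) (deriv ψ) := (contDiff_infty_iff_deriv.1 hpsiT).2
  have hF : ContDiff ℝ 1 F := by
    apply ContDiff.prodMk contDiff_snd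
    have hψd1 : ContDiff ℝ 1 (deriv ψ) := hψd.of_le (by exact_mod_cast le_top)
    exact contDiff_snd.mul (hψd1.comp contDiff_fst)
  -- Lipschitz and norm bounds on a big ball
  set D : Set (ℝ × ℝ) := closedBall (0 : ℝ × ℝ) (L + M + 2) with hDdef
  have hDcomp : IsCompact D := isCompact_closedBall _ _
  obtain ⟨Kb, hKb⟩ := hDcomp.exists_bound_of_continuousOn
    ((hF.continuous_fderiv one_ne_zero).continuousOn)
  have hKlip : LipschitzOnWith Kb.toNNReal F D := by
    apply Convex.lipschitzOnWith_of_nnnorm_fderiv_le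
      (fun p _ => hF.differentiable one_ne_zero p) ?_ (convex_closedBall _ _)
    intro p hp
    rw [← NNReal.coe_le_coe, coe_nnnorm, Real.coe_toNNReal']
    exact le_max_of_le_left (hKb p hp)
  obtain ⟨Cb0, hCb0⟩ := hDcomp.exists_bound_of_continuousOn (hF.continuous.continuousOn)
  set Cb : ℝ := max Cb0 1 with hCbdef
  have hCbpos : 0 < Cb := lt_of_lt_of_le one_pos (le_max_right _ _)
  have hCb : ∀ p ∈ D, ‖F p‖ ≤ Cb := fun p hp => (hCb0 p hp).trans (le_max_left _ _)
  set ε : ℝ := 1 / (2 * Cb) with hεdef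
  have hε : 0 < ε := by positivity
  have hCbε : Cb * ε = 1 / 2 := by rw [hεdef]; field_simp
  set t₀ : ℝ := max (τ - ε / 2) (τ / 2) with ht₀def
  have ht₀pos : 0 < t₀ := lt_of_lt_of_le (by linarith) (le_max_right _ _)
  have ht₀τ : t₀ < τ := max_lt (by linarith) (by linarith)
  have hτt₀ : τ - t₀ ≤ ε / 2 := by
    have := le_max_left (τ - ε / 2) (τ / 2)
    simp only [← ht₀def] at this
    linarith
  have hτε : τ < t₀ + ε := by linarith
  set z₀ : ℝ × ℝ := g t₀ with hz₀def
  -- trajectory stays in D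
  have hM0 : (0:ℝ) < M := lt_of_lt_of_le one_pos hM1
  have hgD : ∀ t : ℝ, 0 ≤ t → t < τ → g t ∈ D := by
    intro t h0 hτ'
    obtain ⟨hv, hx, -⟩ := hfacts t h0 hτ'
    rw [hDdef, mem_closedBall_zero_iff, hgdef, Prod.norm_def]
    have h1 : |x₁ t| ≤ L := by
      rw [abs_of_pos (by linarith)]; exact hxle t h0 hτ'
    have h2 : |deriv x₁ t| ≤ M := by
      rw [abs_of_pos hv]; exact hbdd t h0 hτ'
    simp only [Real.norm_eq_abs]
    apply max_le <;> [linarith; linarith]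
  have hball_sub : closedBall z₀ 1 ⊆ D := by
    apply closedBall_subset_closedBall'
    have hz : ‖z₀‖ ≤ L + M + 1 := by
      have := hgD t₀ ht₀pos.le ht₀τ
      rw [hDdef, mem_closedBall_zero_iff] at this
      -- this gives ≤ L+M+2, too weak; recompute directly
      obtain ⟨hv, hx, -⟩ := hfacts t₀ ht₀pos.le ht₀τ
      rw [hz₀def, hgdef, Prod.norm_def]
      have h1 : |x₁ t₀| ≤ L := by rw [abs_of_pos (by linarith)]; exact hxle t₀ ht₀pos.le ht₀τ
      have h2 : |deriv x₁ t₀| ≤ M := by rw [abs_of_pos hv]; exact hbdd t₀ ht₀pos.le ht₀τ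
      simp only [Real.norm_eq_abs]
      apply max_le <;> [linarith; linarith]
    rw [dist_zero_right]
    linarith
  -- Picard–Lindelöf
  have hPL : IsPicardLindelof (tmin := t₀) (tmax := t₀ + ε) (fun _ => F)
      ⟨t₀, left_mem_Icc.2 (by linarith)⟩ z₀ 1 0 Cb.toNNReal Kb.toNNReal :=
    { lipschitzOnWith := fun t _ => by rw [NNReal.coe_one]; exact hKlip.mono hball_sub
      continuousOn := fun p _ => continuousOn_const
      norm_le := fun t _ p hp => by
        rw [Real.coe_toNNReal _ hCbpos.le]; exact hCb p (hball_sub (by simpa using hp))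
      mul_max_le := by
        push_cast
        rw [Real.coe_toNNReal _ hCbpos.le, add_sub_cancel_left, sub_self, max_eq_left hε.le,
          hCbε]; norm_num }
  obtain ⟨β, hβ0, hβ⟩ := aux_exists_solution_mem z₀ hPL
  -- trajectory stays in the small ball up to any c < τ
  have hgball : ∀ c : ℝ, t₀ ≤ c → c < τ → ∀ u ∈ Icc t₀ c, g u ∈ closedBall z₀ 1 := by
    intro c hc1 hc2 u hu
    have hseg := norm_image_sub_le_of_norm_deriv_le_segment'
      (f := g) (f' := fun u => F (g u)) (C := Cb) (a := t₀) (b := c)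
      (fun w hw => (hg w (le_trans ht₀pos.le hw.1) (lt_of_le_of_lt hw.2 hc2)).hasDerivWithinAt)
      (fun w hw => hCb _ (hgD w (le_trans ht₀pos.le hw.1) (lt_trans hw.2 hc2)))
      u hu
    rw [mem_closedBall, dist_eq_norm, hz₀def]
    have h1 : Cb * (u - t₀) ≤ Cb * (ε / 2) := by
      apply mul_le_mul_of_nonneg_left _ hCbpos.le
      have := hu.2
      linarith
    calc ‖g u - g t₀‖ ≤ Cb * (u - t₀) := hseg
      _ ≤ Cb * (ε / 2) := h1
      _ ≤ 1 := by nlinarith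
  -- uniqueness: g = β on [t₀, τ)
  have huniq : ∀ t : ℝ, t₀ ≤ t → t < τ → g t = β t := by
    intro t ht1 ht2
    have hsub : Icc t₀ t ⊆ Icc t₀ (t₀ + ε) := Icc_subset_Icc le_rfl (by linarith)
    have := ODE_solution_unique_of_mem_Icc_right
      (v := fun _ (p : ℝ × ℝ) => F p) (s := fun _ => closedBall z₀ 1)
      (K := Kb.toNNReal) (f := g) (g := β) (a := t₀) (b := t)
      (fun u _ => hKlip.mono hball_sub)
      (fun u hu => (hg u (le_trans ht₀pos.le hu.1)
        (lt_of_le_of_lt hu.2 ht2)).continuousAt.continuousWithinAt)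
      (fun u hu => (hg u (le_trans ht₀pos.le hu.1)
        (lt_trans hu.2 ht2)).hasDerivWithinAt)
      (fun u hu => hgball t ht1 ht2 u (Ico_subset_Icc_self hu))
      (fun u hu => ((hβ u (hsub hu)).2.continuousWithinAt).mono hsub)
      (fun u hu => ((hβ u (hsub (Ico_subset_Icc_self hu))).2).mono_of_mem_nhdsWithin
        (Icc_mem_nhdsGE_of_mem ⟨hu.1, by linarith [hu.2]⟩))
      (fun u hu => (hβ u (hsub (Ico_subset_Icc_self hu))).1)
      (by rw [hβ0])
    exact this (right_mem_Icc.2 ht1)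
  -- the extension
  refine ⟨t₀ + ε, fun u => if u < t₀ then x₁ u else (β u).1, hτε, ?_, ?_⟩
  · intro u h0 huτ
    by_cases h : u < t₀
    · simp only [if_pos h]
    · simp only [if_neg h]
      rw [← huniq u (not_lt.1 h) huτ]
  · intro t h0 ht'
    set y₁ : ℝ → ℝ := fun u => if u < t₀ then x₁ u else (β u).1 with hy₁def
    have hy_x : ∀ u ∈ Iio τ, y₁ u = x₁ u := by
      intro u hu
      by_cases h : u < t₀
      · rw [hy₁def]; simp only [if_pos h]
      · rw [hy₁def]; simp only [if_neg h]
        rw [← huniq u (not_lt.1 h) hu]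
    by_cases ht : t < τ
    · have hev : y₁ =ᶠ[nhds t] x₁ := Filter.eventuallyEq_of_mem (Iio_mem_nhds ht) hy_x
      obtain ⟨hD1, hD2, hodet⟩ := hsol' t h0 ht
      have hdev : deriv y₁ =ᶠ[nhds t] deriv x₁ := hev.deriv
      refine ⟨hev.differentiableAt_iff.2 hD1, hdev.differentiableAt_iff.2 hD2, ?_⟩
      rw [hdev.deriv_eq, hodet, hdev.self_of_nhds, hev.self_of_nhds]
    · push_neg at ht
      have ht₀t : t₀ < t := lt_of_lt_of_le ht₀τ ht
      have htIoo : t ∈ Ioo t₀ (t₀ + ε) := ⟨ht₀t, ht'⟩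
      have hβopen : ∀ u ∈ Ioo t₀ (t₀ + ε), HasDerivAt β (F (β u)) u := fun u hu =>
        ((hβ u (Ioo_subset_Icc_self hu)).2).hasDerivAt (Icc_mem_nhds hu.1 hu.2)
      have h1 : ∀ u ∈ Ioo t₀ (t₀ + ε), HasDerivAt (fun w => (β w).1) ((β u).2) u := by
        intro u hu
        have := ((ContinuousLinearMap.fst ℝ ℝ ℝ).hasFDerivAt).comp_hasDerivAt u (hβopen u hu)
        exact this
      have h2 : ∀ u ∈ Ioo t₀ (t₀ + ε),
          HasDerivAt (fun w => (β w).2) ((β u).2 * deriv ψ ((β u).1)) u := by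
        intro u hu
        have := ((ContinuousLinearMap.snd ℝ ℝ ℝ).hasFDerivAt).comp_hasDerivAt u (hβopen u hu)
        exact this
      have hevβ : y₁ =ᶠ[nhds t] fun w => (β w).1 :=
        Filter.eventuallyEq_of_mem (Ioi_mem_nhds ht₀t)
          (fun u hu => by rw [hy₁def]; simp only [if_neg (not_lt.2 (le_of_lt (mem_Ioi.1 hu)))])
      have hder_ev : deriv y₁ =ᶠ[nhds t] fun w => (β w).2 :=
        hevβ.deriv.trans (Filter.eventuallyEq_of_mem (Ioo_mem_nhds htIoo.1 htIoo.2)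
          (fun u hu => (h1 u hu).deriv))
      refine ⟨hevβ.differentiableAt_iff.2 (h1 t htIoo).differentiableAt,
        hder_ev.differentiableAt_iff.2 (h2 t htIoo).differentiableAt, ?_⟩
      rw [hder_ev.deriv_eq, (h2 t htIoo).deriv, hder_ev.self_of_nhds, hevβ.self_of_nhds]

def SolvesGeo (ψ : ℝ → ℝ) (x₁ : ℝ → ℝ) (T : EReal) : Prop :=
  ∀ t : ℝ, 0 ≤ t → (t : EReal) < T →
    DifferentiableAt ℝ x₁ t ∧ DifferentiableAt ℝ (deriv x₁) t ∧
    deriv (deriv x₁) t = deriv x₁ t * deriv ψ (x₁ t)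

theorem stmt_14 (ψ : ℝ → ℝ) (hψ : ContDiff ℝ (⊤ : ℕ∞) ψ)
    (hψ' : ∀ y : ℝ, 1 ≤ y → y ≤ deriv ψ y)
    (hψ'' : ∀ y : ℝ, 1 ≤ y → 1 ≤ deriv (deriv ψ) y)
    (x₁ : ℝ → ℝ) (T : EReal) (hT : 0 < T)
    (hx0 : x₁ 0 = 1) (hx'0 : deriv x₁ 0 = 1)
    (hsol : SolvesGeo ψ x₁ T)
    (hmax : ¬ ∃ (T' : EReal) (y₁ : ℝ → ℝ), T < T' ∧
        (∀ t : ℝ, 0 ≤ t → (t : EReal) < T → y₁ t = x₁ t) ∧ SolvesGeo ψ y₁ T') :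
    T < ⊤ ∧
    Filter.Tendsto
      (fun t : ℝ => -(deriv x₁ t) * deriv (deriv ψ) (x₁ t) - (1 / 2) * (deriv ψ (x₁ t)) ^ 2)
      (nhdsWithin T.toReal (Set.Iio T.toReal)) Filter.atBot := by
  -- apply geo_core on [0,b] whenever (b:EReal) < T
  have hcore : ∀ b : ℝ, 0 ≤ b → (b : EReal) < T →
      (∀ t ∈ Icc 0 b, 0 < deriv x₁ t) ∧ (∀ t ∈ Icc 0 b, 1 ≤ x₁ t) ∧
      MonotoneOn (deriv x₁) (Icc 0 b) ∧
      (∀ t ∈ Icc 0 b, x₁ t ^ 2 / 2 + 1 / 2 ≤ deriv x₁ t) ∧ b < 2 := by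
    intro b hb hbT
    have hmem : ∀ t ∈ Icc (0:ℝ) b, 0 ≤ t ∧ (t : EReal) < T := by
      intro t ht
      exact ⟨ht.1, lt_of_le_of_lt (EReal.coe_le_coe_iff.2 ht.2) hbT⟩
    exact geo_core ψ x₁ b hb
      (fun t ht => (hsol t (hmem t ht).1 (hmem t ht).2).1)
      (fun t ht => (hsol t (hmem t ht).1 (hmem t ht).2).2.1)
      (fun t ht => (hsol t (hmem t ht).1 (hmem t ht).2).2.2)
      hψ' hx0 hx'0
  -- T ≤ 2
  have hT2 : T ≤ ((2:ℝ) : EReal) := by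
    by_contra h
    push_neg at h
    have := (hcore 2 (by norm_num) h).2.2.2.2
    linarith
  have hTtop : T ≠ ⊤ := fun h => by rw [h] at hT2; exact absurd hT2 (by simp)
  have hTbot : T ≠ ⊥ := fun h => by rw [h] at hT; exact absurd hT (by simp)
  have hTlttop : T < ⊤ := lt_top_iff_ne_top.2 hTtop
  set τ := T.toReal with hτ
  have hcoeT : (τ : EReal) = T := EReal.coe_toReal hTtop hTbot
  have hτpos : 0 < τ := by
    have : ((0:ℝ) : EReal) < (τ : EReal) := by rw [hcoeT]; exact_mod_cast hT
    exact_mod_cast EReal.coe_lt_coe_iff.1 this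
  have hdom : ∀ t : ℝ, t < τ ↔ (t : EReal) < T := by
    intro t; rw [← hcoeT]; exact EReal.coe_lt_coe_iff.symm
  refine ⟨hTlttop, ?_⟩
  by_cases hbdd : ∃ M : ℝ, ∀ t, 0 ≤ t → t < τ → deriv x₁ t ≤ M
  · exfalso
    obtain ⟨M0, hM0⟩ := hbdd
    set M : ℝ := max M0 1 with hMdef
    have hbdd' : ∀ t : ℝ, 0 ≤ t → t < τ → deriv x₁ t ≤ M := fun t h1 h2 =>
      (hM0 t h1 h2).trans (le_max_left _ _)
    have hsol' : ∀ t : ℝ, 0 ≤ t → t < τ →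
        DifferentiableAt ℝ x₁ t ∧ DifferentiableAt ℝ (deriv x₁) t ∧
          deriv (deriv x₁) t = deriv x₁ t * deriv ψ (x₁ t) := fun t h1 h2 =>
      hsol t h1 ((hdom t).1 h2)
    have hfacts : ∀ t : ℝ, 0 ≤ t → t < τ → 0 < deriv x₁ t ∧ 1 ≤ x₁ t ∧ t < 2 := by
      intro t h1 h2
      obtain ⟨a, b, c, d, e⟩ := hcore t h1 ((hdom t).1 h2)
      exact ⟨a t ⟨h1, le_rfl⟩, b t ⟨h1, le_rfl⟩, e⟩
    obtain ⟨T', y₁, hT'τ, hagree, hsolves⟩ :=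
      geo_extend ψ x₁ hψ τ hτpos hx0 hsol' hfacts M
        (le_max_right _ _) hbdd'
    apply hmax
    refine ⟨((T' : ℝ) : EReal), y₁, ?_, ?_, ?_⟩
    · rw [← hcoeT]; exact_mod_cast hT'τ
    · intro t h1 h2
      exact hagree t h1 ((hdom t).2 h2)
    · intro t h1 h2
      exact hsolves t h1 (EReal.coe_lt_coe_iff.1 h2)
  · push_neg at hbdd
    have htendv : Filter.Tendsto (deriv x₁) (nhdsWithin τ (Iio τ)) Filter.atTop := by
      rw [Filter.tendsto_atTop]
      intro C
      obtain ⟨t₁, ht₁0, ht₁τ, hC⟩ := hbdd C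
      filter_upwards [Ioo_mem_nhdsLT ht₁τ] with u hu
      have hu0 : (0:ℝ) ≤ u := le_of_lt (lt_of_le_of_lt ht₁0 hu.1)
      have hmono := (hcore u hu0 ((hdom u).1 hu.2)).2.2.1
      have := hmono ⟨ht₁0, hu.1.le⟩ ⟨hu0, le_rfl⟩ hu.1.le
      linarith
    have hneg : Filter.Tendsto (fun t => -(deriv x₁ t)) (nhdsWithin τ (Iio τ))
        Filter.atBot := Filter.tendsto_neg_atTop_atBot.comp htendv
    apply Filter.tendsto_atBot_mono' _ _ hneg
    filter_upwards [Ioo_mem_nhdsLT hτpos] with u hu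
    have hfacts := hcore u hu.1.le ((hdom u).1 hu.2)
    have humem : u ∈ Icc (0:ℝ) u := ⟨hu.1.le, le_rfl⟩
    have hv := hfacts.1 u humem
    have hx := hfacts.2.1 u humem
    have h2 := hψ'' (x₁ u) hx
    have h3 : (0:ℝ) ≤ deriv ψ (x₁ u) ^ 2 := sq_nonneg _
    nlinarith
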